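/- For the discrete Liouville equation t_{uv} = (1/t)(t_u - 1)(t_v - 1), the function F_0 = (t_2/(t_1 - 1) + 1)((t - 1)/t_1 + 1) is a v-invariant: \bar{D}F_0 = F_0 on solutions. -/
import Mathlib


/-- For the discrete Liouville equation `t_{uv} = f = (1/t)(t_u-1)(t_v-1)`, the
function `F₀ = (t₂/(t₁-1) + 1)((t-1)/t₁ + 1)` is a `v`-invariant:
`D̄F₀ = (f₁/(f-1) + 1)((t_v-1)/f + 1) = F₀`, where `f₁ = (1/t₁)(t₂-1)(f-1)`. -/
theorem stmt14 (t t1 t2 tv f f1 : ℝ)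
    (ht : t ≠ 0) (ht1 : t1 ≠ 0) (ht11 : t1 ≠ 1)
    (hf : f = (1/t) * (t1 - 1) * (tv - 1))
    (hf1 : f1 = (1/t1) * (t2 - 1) * (f - 1))
    (hf0 : f ≠ 0) (hfone : f ≠ 1) :
    (f1 / (f - 1) + 1) * ((tv - 1) / f + 1)
      = (t2 / (t1 - 1) + 1) * ((t - 1) / t1 + 1) := by
  subst hf1
  have h1 : t1 - 1 ≠ 0 := sub_ne_zero.mpr ht11
  have h2 : f - 1 ≠ 0 := sub_ne_zero.mpr hfone
  have htv : tv - 1 = f * t / (t1 - 1) := by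
    field_simp at hf ⊢; linarith [hf]
  rw [htv]
  field_simp
  ring
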